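/- Let g > h > 0 and let η be a real number with 0 < η < g − h. Define α = 1/h − 1/g, β = 1/h + 1/g, and ρ* = sqrt(α²/4 + α/η) − β/2. Then ρ* > 0 and g/(1+g·ρ*) − h/(1+h·ρ*) = η; i.e., ρ* satisfies the Lagrangian stationarity condition for the optimal power splitting problem, the derivative with respect to ρ of log(1+gρ) − log(1+hρ) evaluated at ρ* equals η. -/

import Mathlib

/-- For `g > h > 0` and `0 < η < g − h`, with `α = 1/h − 1/g`,
`β = 1/h + 1/g`, `ρ* = sqrt(α²/4 + α/η) − β/2`, one has `ρ* > 0` and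
`g/(1+g·ρ*) − h/(1+h·ρ*) = η` (the Lagrangian stationarity condition,
eqs. (21)–(22) of the paper). -/
theorem optimal_power_splitting_stationarity (g h η : ℝ)
    (hh : 0 < h) (hhg : h < g) (hη0 : 0 < η) (hη1 : η < g - h) :
    0 < Real.sqrt ((1 / h - 1 / g) ^ 2 / 4 + (1 / h - 1 / g) / η) - (1 / h + 1 / g) / 2
    ∧ (let ρs := Real.sqrt ((1 / h - 1 / g) ^ 2 / 4 + (1 / h - 1 / g) / η)
                 - (1 / h + 1 / g) / 2
       g / (1 + g * ρs) - h / (1 + h * ρs) = η) := by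
  have hg : 0 < g := hh.trans hhg
  set α : ℝ := 1 / h - 1 / g with hα
  set β : ℝ := 1 / h + 1 / g with hβ
  have hαpos : 0 < α := by
    have : 1 / g < 1 / h := one_div_lt_one_div_of_lt hh hhg
    simpa [hα] using sub_pos.mpr this
  have hβpos : 0 < β := by positivity
  have hargpos : 0 ≤ α ^ 2 / 4 + α / η := by positivity
  set s : ℝ := Real.sqrt (α ^ 2 / 4 + α / η) with hs
  have hs2 : s ^ 2 = α ^ 2 / 4 + α / η := Real.sq_sqrt hargpos
  have hkey : β ^ 2 / 4 < α ^ 2 / 4 + α / η := by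
    have h1 : β ^ 2 / 4 - α ^ 2 / 4 = 1 / (g * h) := by
      rw [hα, hβ]; field_simp; ring
    have hαval : α * (g * h) = g - h := by rw [hα]; field_simp
    have h2 : 1 / (g * h) < α / η := by
      rw [div_lt_div_iff₀ (by positivity) hη0, one_mul, hαval]; exact hη1
    linarith
  have hspos : β / 2 < s := by
    rw [hs]
    have : β / 2 = Real.sqrt ((β / 2) ^ 2) := by
      rw [Real.sqrt_sq (by positivity)]
    rw [this]
    apply Real.sqrt_lt_sqrt (by positivity)
    nlinarith
  have hρ : 0 < s - β / 2 := sub_pos.mpr hspos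
  refine ⟨hρ, ?_⟩
  set ρ : ℝ := s - β / 2 with hρdef
  have hprod : (1 + g * ρ) * (1 + h * ρ) = (g - h) / η := by
    have e1 : ρ ^ 2 + β * ρ = s ^ 2 - β ^ 2 / 4 := by rw [hρdef]; ring
    have e2 : ρ ^ 2 + β * ρ = α / η - 1 / (g * h) := by
      rw [e1, hs2]
      have : β ^ 2 / 4 - α ^ 2 / 4 = 1 / (g * h) := by
        rw [hα, hβ]; field_simp; ring
      linarith
    have e3 : (1 + g * ρ) * (1 + h * ρ) = 1 + g * h * (ρ ^ 2 + β * ρ) := by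
      have : g * h * β = g + h := by rw [hβ]; field_simp
      nlinarith [this]
    rw [e3, e2]
    have : g * h * (α / η - 1 / (g * h)) = (g - h) / η - 1 := by
      rw [hα]
      field_simp
    rw [this]; ring
  have hd1 : 0 < 1 + g * ρ := by have := mul_pos hg hρ; linarith
  have hd2 : 0 < 1 + h * ρ := by have := mul_pos hh hρ; linarith
  show g / (1 + g * ρ) - h / (1 + h * ρ) = η
  rw [div_sub_div _ _ (ne_of_gt hd1) (ne_of_gt hd2), div_eq_iff (mul_pos hd1 hd2).ne']
  rw [hprod]
  have e : η * ((g - h) / η) = g - h := by field_simp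
  rw [e]; ring
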